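/- Let k ≥ 1 and let (λ₁,…,λ_k,μ₁,…,μ_k) ∈ ℂ^{2k} satisfy λ_i ≠ λ₁ and μ_i ≠ μ₁ for all 2 ≤ i ≤ k. Then D̃₁₁^{bulk,k}(λ,μ) = (−1)^{k−1} · ∏_{m=2}^k ( (1+(λ_m−λ₁)(μ_m−μ₁)) / ((λ_m−λ₁)²(μ_m−μ₁)²) ) · ( ∏_{m=2}^k ( 1 − (λ_m−λ₁)(μ_m−μ₁) − (λ_m−λ₁)·∂/∂λ_m ) ) ρ̃(λ,μ), where ∂/∂λ_m denotes the complex partial derivative in the variable λ_m (with all other variables, including μ_m, held fixed); the first-order operators in the product commute, so the product is unambiguous. -/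

import Mathlib

open ComplexConjugate Filter MeasureTheory Topology

noncomputable section

/-- Exponential polynomial `e_p(x) = ∑_{k=0}^p x^k/k!`. -/
def epol (p : ℕ) (x : ℂ) : ℂ := ∑ k ∈ Finset.range (p + 1), x ^ k / (Nat.factorial k : ℂ)

/-- `f_p(x) = (p+1)·e_p(x) - x·e_{p-1}(x)`, with `e_{-1} ≡ 0`. -/
def fpol (p : ℕ) (x : ℂ) : ℂ :=
  ((p : ℂ) + 1) * epol p x - x * (if p = 0 then 0 else epol (p - 1) x)

/-- The polynomial `𝔉_n(x,y,z)`. -/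
def Fgoth (n : ℕ) (x y z : ℂ) : ℂ :=
  epol n (x * y) * epol n (x * z) - epol n (x * y * z) * epol n x * (1 - x * (1 - y) * (1 - z))
    + ((1 - y) * (1 - z) / (Nat.factorial n : ℂ)) *
      (((x * y * z) ^ (n + 1) * epol n x - x ^ (n + 1) * epol n (x * y * z)) / (1 - y * z))

/-- The weight `ω(x,y|λ,μ) = (1/π)(1+(x-λ)(y-μ))e^{-xy}`. -/
def omegaW (x y l m : ℂ) : ℂ :=
  (1 / (Real.pi : ℂ)) * (1 + (x - l) * (y - m)) * Complex.exp (-(x * y))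

/-- The finite-`N` reduced kernel `κ^{(N)}(x̄,y|λ,λ̄)`. -/
def kapN (N : ℕ) (xb y l lb : ℂ) : ℂ :=
  (((N : ℂ) + 1) * Fgoth (N + 1) (l * lb) (xb / lb) (y / l)
      - l * lb * Fgoth N (l * lb) (xb / lb) (y / l)) /
    ((xb - lb) ^ 2 * (y - l) ^ 2 * fpol N (l * lb))

/-- The finite-`N` kernel `K₁₁^{(N)}(x,x̄,y,ȳ|λ,λ̄)`. -/
def K11N (N : ℕ) (x xb y yb l lb : ℂ) : ℂ := omegaW x xb l lb * kapN N xb y l lb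

/-- The finite-`N` kernel `K₁₂^{(N)}(x,x̄,y,ȳ|u,ū,v,v̄)`. -/
def K12N (N : ℕ) (x xb y yb u ub v vb : ℂ) : ℂ :=
  omegaW x xb u vb / kapN N ub v u vb *
    (kapN N ub v u vb * kapN N xb y u vb - kapN N ub y u vb * kapN N xb v u vb)

/-- `Z_N = π^N ∏_{j=1}^N j!`. -/
def Zconst (N : ℕ) : ℂ := (Real.pi : ℂ) ^ N * ∏ j ∈ Finset.Icc 1 N, (Nat.factorial j : ℂ)

/-- Vandermonde product `∏_{0 ≤ j < i < n} (v i - v j)`. -/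
def vdm (n : ℕ) (v : ℕ → ℂ) : ℂ := ∏ i ∈ Finset.range n, ∏ j ∈ Finset.range i, (v i - v j)

/-- Pads the `k` conditioned eigenvalues `lam` with the `N-k` integration variables `w`. -/
def pad (N k : ℕ) (lam : Fin k → ℂ) (w : Fin (N - k) → ℂ) (m : ℕ) : ℂ :=
  if h : m < k then lam ⟨m, h⟩ else if h2 : m - k < N - k then w ⟨m - k, h2⟩ else 0

/-- Conditional diagonal overlap `D₁₁^{(N,k)}`. -/
def D11 (N k : ℕ) (lam : Fin k → ℂ) : ℂ :=
  (Nat.factorial N : ℂ) / (Nat.factorial (N - k) : ℂ) / Zconst N *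
    Complex.exp (-(pad N k lam (fun _ => 0) 0 * conj (pad N k lam (fun _ => 0) 0))) *
    ∫ w : Fin (N - k) → ℂ,
      vdm (N - 1) (fun m => pad N k lam w (m + 1)) *
        conj (vdm (N - 1) (fun m => pad N k lam w (m + 1))) *
        ∏ m ∈ Finset.Icc 1 (N - 1),
          ((1 + (pad N k lam w m - pad N k lam w 0) *
                (conj (pad N k lam w m) - conj (pad N k lam w 0))) *
            Complex.exp (-(pad N k lam w m * conj (pad N k lam w m))))

/-- Conditional off-diagonal overlap `D₁₂^{(N,k)}`. -/
def D12 (N k : ℕ) (lam : Fin k → ℂ) : ℂ :=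
  -((Nat.factorial N : ℂ) / (Nat.factorial (N - k) : ℂ) / Zconst N *
    Complex.exp (-(pad N k lam (fun _ => 0) 0 * conj (pad N k lam (fun _ => 0) 0)
        + pad N k lam (fun _ => 0) 1 * conj (pad N k lam (fun _ => 0) 1))) *
    ∫ w : Fin (N - k) → ℂ,
      vdm (N - 1) (fun m => pad N k lam w (m + 1)) *
        vdm (N - 1) (fun m => conj (pad N k lam w (if m = 0 then 0 else m + 1))) *
        ∏ m ∈ Finset.Icc 2 (N - 1),
          ((1 + (pad N k lam w m - pad N k lam w 0) *
                (conj (pad N k lam w m) - conj (pad N k lam w 1))) *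
            Complex.exp (-(pad N k lam w m * conj (pad N k lam w m)))))

/-- `D̃₁₁^{(N,k)}` with the conjugated variables treated as independent. -/
def D11t (N k : ℕ) (lam mu : Fin k → ℂ) : ℂ :=
  (Nat.factorial N : ℂ) / (Nat.factorial (N - k) : ℂ) / Zconst N *
    Complex.exp (-(pad N k lam (fun _ => 0) 0 * pad N k mu (fun _ => 0) 0)) *
    ∫ w : Fin (N - k) → ℂ,
      vdm (N - 1) (fun m => pad N k lam w (m + 1)) *
        vdm (N - 1) (fun m => pad N k mu (fun i => conj (w i)) (m + 1)) *
        ∏ m ∈ Finset.Icc 1 (N - 1),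
          ((1 + (pad N k lam w m - pad N k lam w 0) *
                (pad N k mu (fun i => conj (w i)) m - pad N k mu (fun i => conj (w i)) 0)) *
            Complex.exp (-(pad N k lam w m * pad N k mu (fun i => conj (w i)) m)))

/-- `D̃₁₂^{(N,k)}` with the conjugated variables treated as independent. -/
def D12t (N k : ℕ) (lam mu : Fin k → ℂ) : ℂ :=
  -((Nat.factorial N : ℂ) / (Nat.factorial (N - k) : ℂ) / Zconst N *
    Complex.exp (-(pad N k lam (fun _ => 0) 0 * pad N k mu (fun _ => 0) 0
        + pad N k lam (fun _ => 0) 1 * pad N k mu (fun _ => 0) 1)) *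
    ∫ w : Fin (N - k) → ℂ,
      vdm (N - 1) (fun m => pad N k lam w (m + 1)) *
        vdm (N - 1) (fun m => pad N k mu (fun i => conj (w i)) (if m = 0 then 0 else m + 1)) *
        ∏ m ∈ Finset.Icc 2 (N - 1),
          ((1 + (pad N k lam w m - pad N k lam w 0) *
                (pad N k mu (fun i => conj (w i)) m - pad N k mu (fun i => conj (w i)) 1)) *
            Complex.exp (-(pad N k lam w m * pad N k mu (fun i => conj (w i)) m))))

/-- Bulk weight `ω^{bulk}`. -/
def omegaBulk (u ub l lb : ℂ) : ℂ :=
  (1 / (Real.pi : ℂ)) * (1 + (u - l) * (ub - lb)) * Complex.exp (-((u - l) * (ub - lb)))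

/-- Bulk reduced kernel `κ^{bulk}(ū,v|λ,λ̄) = (1+(w-1)e^w)/w²`, `w = (ū-λ̄)(v-λ)`. -/
def kapBulk (ub v l lb : ℂ) : ℂ :=
  (1 + ((ub - lb) * (v - l) - 1) * Complex.exp ((ub - lb) * (v - l))) /
    ((ub - lb) * (v - l)) ^ 2

def K11bulk (u ub v vb l lb : ℂ) : ℂ := omegaBulk u ub l lb * kapBulk ub v l lb

def K12bulk (x xb y yb u ub v vb : ℂ) : ℂ :=
  omegaBulk x xb u vb / kapBulk ub v u vb *
    (kapBulk ub v u vb * kapBulk xb y u vb - kapBulk ub y u vb * kapBulk xb v u vb)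

/-- `F(a) = (2π)^{-1/2} ∫₀^∞ e^{-(a+t)²/2} dt`, entire continuation of `(1/2)erfc(a/√2)`. -/
def Ferf (a : ℂ) : ℂ :=
  (1 / (Real.sqrt (2 * Real.pi) : ℂ)) *
    ∫ t in Set.Ioi (0 : ℝ), Complex.exp (-((a + (t : ℂ)) ^ 2) / 2)

/-- The function `H(a,b,c,d,f)` from the edge scaling limit. -/
def Hedge (a b c d f : ℂ) : ℂ :=
  -(Real.sqrt (2 * Real.pi) : ℂ) /
      (1 - (Real.sqrt (2 * Real.pi) : ℂ) * a * Complex.exp (a ^ 2 / 2) * Ferf a) *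
    deriv (fun x : ℂ =>
      Complex.exp ((a + x) ^ 2 / 2) *
        (Complex.exp (-f) * Ferf (b + x) * Ferf (c + x) - Ferf (d + x) * Ferf (a + x) +
          f * Ferf d * Ferf (a + x))) 0

def omegaEdge (x xb l lb : ℂ) : ℂ :=
  (1 / (Real.pi : ℂ)) * (1 + (x - l) * (xb - lb)) * Complex.exp (-(x * xb))

def kapEdge (xb y l lb : ℂ) : ℂ :=
  Complex.exp (xb * y) * Hedge (l + lb) (l + xb) (y + lb) (y + xb) ((l - y) * (lb - xb)) /
    ((l - y) ^ 2 * (lb - xb) ^ 2)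

def K11edge (x xb y yb l lb : ℂ) : ℂ := omegaEdge x xb l lb * kapEdge xb y l lb

def K12edge (x xb y yb u ub v vb : ℂ) : ℂ :=
  omegaEdge x xb u vb / kapEdge ub v u vb *
    (kapEdge ub v u vb * kapEdge xb y u vb - kapEdge ub y u vb * kapEdge xb v u vb)

/-- Index embedding `Fin (k-1) → Fin k`, `i ↦ i+1`. -/
def sh1 {k : ℕ} (i : Fin (k - 1)) : Fin k := ⟨i.val + 1, by have := i.isLt; omega⟩

/-- Index embedding `Fin (k-2) → Fin k`, `i ↦ i+2`. -/
def sh2 {k : ℕ} (i : Fin (k - 2)) : Fin k := ⟨i.val + 2, by have := i.isLt; omega⟩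

def ev0 {k : ℕ} (lam : Fin k → ℂ) : ℂ := if h : 0 < k then lam ⟨0, h⟩ else 0

def ev1 {k : ℕ} (lam : Fin k → ℂ) : ℂ := if h : 1 < k then lam ⟨1, h⟩ else 0

/-- The edge overlap function `D₁₁^{edge,k}`. -/
def D11edgeF (k : ℕ) (lam : Fin k → ℂ) : ℂ :=
  (1 / (Real.sqrt (2 * Real.pi ^ 3) : ℂ)) *
    (Complex.exp (-((ev0 lam + conj (ev0 lam)) ^ 2 / 2)) -
      (Real.sqrt (2 * Real.pi) : ℂ) * (ev0 lam + conj (ev0 lam)) *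
        Ferf (ev0 lam + conj (ev0 lam))) *
    Matrix.det (Matrix.of fun i j : Fin (k - 1) =>
      K11edge (lam (sh1 i)) (conj (lam (sh1 i))) (lam (sh1 j)) (conj (lam (sh1 j)))
        (ev0 lam) (conj (ev0 lam)))

/-- The bulk overlap function `D₁₁^{bulk,k}`. -/
def D11bulkF (k : ℕ) (lam : Fin k → ℂ) : ℂ :=
  (1 / (Real.pi : ℂ)) *
    Matrix.det (Matrix.of fun i j : Fin (k - 1) =>
      K11bulk (lam (sh1 i)) (conj (lam (sh1 i))) (lam (sh1 j)) (conj (lam (sh1 j)))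
        (ev0 lam) (conj (ev0 lam)))

/-- The bulk off-diagonal overlap function `D₁₂^{bulk,k}`. -/
def D12bulkF (k : ℕ) (lam : Fin k → ℂ) : ℂ :=
  -(1 / (Real.pi : ℂ) ^ 2) * kapBulk (conj (ev0 lam)) (ev1 lam) (ev0 lam) (conj (ev1 lam)) *
    Matrix.det (Matrix.of fun i j : Fin (k - 2) =>
      K12bulk (lam (sh2 i)) (conj (lam (sh2 i))) (lam (sh2 j)) (conj (lam (sh2 j)))
        (ev0 lam) (conj (ev0 lam)) (ev1 lam) (conj (ev1 lam)))

/-- The first-order differential operator `𝔇_m = 1 - (λ_m-λ₁)(μ_m-μ₁) - (λ_m-λ₁)∂/∂λ_m`. -/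
def Dop {k : ℕ} (m : Fin k) (g : (Fin k → ℂ) → (Fin k → ℂ) → ℂ)
    (lam mu : Fin k → ℂ) : ℂ :=
  (1 - (lam m - lam ⟨0, m.pos⟩) * (mu m - mu ⟨0, m.pos⟩)) * g lam mu -
    (lam m - lam ⟨0, m.pos⟩) * deriv (fun t => g (Function.update lam m t) mu) (lam m)

/-- Holomorphic extension `ρ̃` of the bulk `k`-point Ginibre correlation function. -/
def rhoT (k : ℕ) (lam mu : Fin k → ℂ) : ℂ :=
  ((Real.pi : ℂ) ^ k)⁻¹ * Complex.exp (-(∑ m, lam m * mu m)) *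
    Matrix.det (Matrix.of fun i j : Fin k => Complex.exp (mu i * lam j))

/-- Holomorphic extension `D̃₁₁^{bulk,k}` of the bulk conditional diagonal overlap. -/
def D11tBulk (k : ℕ) (lam mu : Fin k → ℂ) : ℂ :=
  ((Real.pi : ℂ) ^ k)⁻¹ *
    (∏ i : Fin (k - 1),
      (1 + (lam (sh1 i) - ev0 lam) * (mu (sh1 i) - ev0 mu)) /
          ((lam (sh1 i) - ev0 lam) ^ 2 * (mu (sh1 i) - ev0 mu) ^ 2) *
        Complex.exp (-((lam (sh1 i) - ev0 lam) * (mu (sh1 i) - ev0 mu)))) *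
    Matrix.det (Matrix.of fun m n : Fin (k - 1) =>
      1 - (1 - (mu (sh1 m) - ev0 mu) * (lam (sh1 n) - ev0 lam)) *
        Complex.exp ((mu (sh1 m) - ev0 mu) * (lam (sh1 n) - ev0 lam)))

/-- Monic bi-orthogonal polynomials `P_k(z)` for the weight `ω(·,·|λ,λ̄)`. -/
def Ppoly (l : ℂ) (k : ℕ) (z : ℂ) : ℂ :=
  ∑ m ∈ Finset.range (k + 1), l ^ (k - m) * (fpol m (l * conj l) / fpol k (l * conj l)) * z ^ m

/-- The reduced kernel `G^{(N)}(x,y,z)` as a double sum. -/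
def Gker (N : ℕ) (x y z : ℂ) : ℂ :=
  ∑ m ∈ Finset.range (N + 1), ∑ n ∈ Finset.range (N + 1),
    fpol m x * fpol n x * y ^ m * z ^ n *
      ∑ k ∈ Finset.Icc (max m n) N,
        x ^ k / ((Nat.factorial (k + 1) : ℂ) * fpol k x * fpol (k + 1) x)

end

noncomputable section AuxS10

open Matrix

variable {K : ℕ}

/-- The matrix whose columns in `L` have been hit by the operators. -/
def Amat (L : List (Fin (K + 1))) (lam mu : Fin (K + 1) → ℂ) :
    Matrix (Fin (K + 1)) (Fin (K + 1)) ℂ :=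
  Matrix.of fun i j =>
    if j ∈ L then (1 - (lam j - lam 0) * (mu i - mu 0)) * Complex.exp (mu i * lam j)
    else Complex.exp (mu i * lam j)

/-- Intermediate value of the fold. -/
def Ffun (L : List (Fin (K + 1))) (lam mu : Fin (K + 1) → ℂ) : ℂ :=
  ((Real.pi : ℂ) ^ (K + 1))⁻¹ * Complex.exp (-(∑ m, lam m * mu m)) * (Amat L lam mu).det

lemma dop_step (n : Fin (K + 1)) (L : List (Fin (K + 1))) (hn : n ∉ L) (h0 : n ≠ 0)
    (lam mu : Fin (K + 1) → ℂ) :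
    Dop n (Ffun L) lam mu = Ffun (n :: L) lam mu := by
  classical
  have h00 : (⟨0, n.pos⟩ : Fin (K + 1)) = 0 := by ext; simp
  set M : Matrix (Fin (K + 1)) (Fin (K + 1)) ℂ := Amat L lam mu with hM
  -- the sum splits
  set S : ℂ := ∑ m ∈ Finset.univ.erase n, lam m * mu m with hS
  have hsum : ∀ t : ℂ, (∑ m, Function.update lam n t m * mu m) = t * mu n + S := by
    intro t
    rw [← Finset.add_sum_erase _ _ (Finset.mem_univ n)]
    simp only [Function.update_self]
    congr 1
    refine Finset.sum_congr rfl fun m hm => ?_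
    rw [Function.update_of_ne (Finset.ne_of_mem_erase hm)]
  -- the matrix after updating lam at n
  have hmat : ∀ t : ℂ, Amat L (Function.update lam n t) mu =
      M.updateCol n fun i => Complex.exp (mu i * t) := by
    intro t
    ext i j
    rw [Matrix.updateCol_apply]
    by_cases hj : j = n
    · subst hj
      simp [Amat, hn, Function.update_self]
    · have hj0 : Function.update lam n t j = lam j := Function.update_of_ne hj _ _
      have h0' : Function.update lam n t 0 = lam 0 :=
        Function.update_of_ne (fun h => h0 h.symm) _ _
      simp only [hM, Amat, Matrix.of_apply, hj0, h0', if_neg hj]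
  -- value of Ffun L after update
  have hval : ∀ t : ℂ, Ffun L (Function.update lam n t) mu =
      ((Real.pi : ℂ) ^ (K + 1))⁻¹ * (Complex.exp (-(t * mu n + S)) *
        (M.updateCol n fun i => Complex.exp (mu i * t)).det) := by
    intro t
    rw [Ffun, hsum t, hmat t, mul_assoc]
  -- derivative of the determinant part
  set M' : Matrix (Fin (K + 1)) (Fin (K + 1)) ℂ :=
    M.updateCol n fun i => mu i * Complex.exp (mu i * lam n) with hM'
  have hprod : ∀ (c : Fin (K + 1) → ℂ) (σ : Equiv.Perm (Fin (K + 1))),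
      (∏ i, (M.updateCol n c) (σ i) i) =
        (∏ i ∈ Finset.univ.erase n, M (σ i) i) * c (σ n) := by
    intro c σ
    rw [← Finset.mul_prod_erase _ _ (Finset.mem_univ n), Matrix.updateCol_self, mul_comm]
    congr 1
    refine Finset.prod_congr rfl fun i hi => ?_
    rw [Matrix.updateCol_ne (Finset.ne_of_mem_erase hi)]
  have hdet : HasDerivAt (fun t => (M.updateCol n fun i => Complex.exp (mu i * t)).det)
      M'.det (lam n) := by
    have h1 : ∀ t : ℂ, (M.updateCol n fun i => Complex.exp (mu i * t)).det =
        ∑ σ : Equiv.Perm (Fin (K + 1)), (Equiv.Perm.sign σ : ℂ) *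
          ((∏ i ∈ Finset.univ.erase n, M (σ i) i) * Complex.exp (mu (σ n) * t)) := by
      intro t
      rw [Matrix.det_apply]
      refine Finset.sum_congr rfl fun σ _ => ?_
      rw [hprod (fun i => Complex.exp (mu i * t)) σ]
      simp only [Units.smul_def, zsmul_eq_mul]
    have h2 : M'.det = ∑ σ : Equiv.Perm (Fin (K + 1)), (Equiv.Perm.sign σ : ℂ) *
        ((∏ i ∈ Finset.univ.erase n, M (σ i) i) *
          (Complex.exp (mu (σ n) * lam n) * mu (σ n))) := by
      rw [hM', Matrix.det_apply]
      refine Finset.sum_congr rfl fun σ _ => ?_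
      rw [hprod (fun i => mu i * Complex.exp (mu i * lam n)) σ]
      simp only [Units.smul_def, zsmul_eq_mul]
      ring
    simp only [h1, h2]
    apply HasDerivAt.fun_sum
    intro σ _
    have h := ((((hasDerivAt_id (lam n)).const_mul (mu (σ n))).cexp).const_mul
      (∏ i ∈ Finset.univ.erase n, M (σ i) i)).const_mul (((Equiv.Perm.sign σ : ℤ) : ℂ))
    simpa [mul_comm, mul_assoc, mul_left_comm] using h
  -- derivative of the exponential part
  have hexp : HasDerivAt (fun t : ℂ => Complex.exp (-(t * mu n + S)))
      (Complex.exp (-(lam n * mu n + S)) * (-(mu n))) (lam n) := by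
    have h := (((hasDerivAt_id (lam n)).mul_const (mu n)).add_const S).neg.cexp
    simpa using h
  have hfull : HasDerivAt (fun t => Ffun L (Function.update lam n t) mu)
      (((Real.pi : ℂ) ^ (K + 1))⁻¹ * (Complex.exp (-(lam n * mu n + S)) * (-(mu n)) * M.det +
        Complex.exp (-(lam n * mu n + S)) * M'.det)) (lam n) := by
    have hMn : (M.updateCol n fun i => Complex.exp (mu i * lam n)) = M := by
      ext i j
      rw [Matrix.updateCol_apply]
      by_cases hj : j = n
      · subst hj; simp [hM, Amat, hn]
      · simp [hj]
    have h := ((hexp.mul hdet).const_mul (((Real.pi : ℂ) ^ (K + 1))⁻¹))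
    rw [hMn] at h
    refine HasDerivAt.congr_of_eventuallyEq h ?_
    filter_upwards [] with t
    rw [hval t]
    rfl
  -- assemble
  have hEsum : (∑ m, lam m * mu m) = lam n * mu n + S := by
    rw [← Finset.add_sum_erase _ _ (Finset.mem_univ n)]
  have hderiv : deriv (fun t => Ffun L (Function.update lam n t) mu) (lam n) =
      ((Real.pi : ℂ) ^ (K + 1))⁻¹ * (Complex.exp (-(lam n * mu n + S)) * (-(mu n)) * M.det +
        Complex.exp (-(lam n * mu n + S)) * M'.det) := hfull.deriv
  -- determinant of the new matrix
  have hAcons : Amat (n :: L) lam mu = M.updateCol n fun i =>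
      (1 - (lam n - lam 0) * (mu i - mu 0)) * Complex.exp (mu i * lam n) := by
    ext i j
    rw [Matrix.updateCol_apply]
    by_cases hj : j = n
    · subst hj; simp [Amat]
    · have : (j ∈ n :: L) ↔ (j ∈ L) := by
        simp [List.mem_cons, hj]
      simp only [this, if_neg hj, hM, Amat, Matrix.of_apply]
  have hdetcons : (Amat (n :: L) lam mu).det =
      (1 + (lam n - lam 0) * mu 0) * M.det + (-(lam n - lam 0)) * M'.det := by
    rw [hAcons]
    have hcol : (fun i => (1 - (lam n - lam 0) * (mu i - mu 0)) * Complex.exp (mu i * lam n)) =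
        ((1 + (lam n - lam 0) * mu 0) • fun i => Complex.exp (mu i * lam n)) +
          ((-(lam n - lam 0)) • fun i => mu i * Complex.exp (mu i * lam n)) := by
      funext i
      simp only [Pi.add_apply, Pi.smul_apply, smul_eq_mul]
      ring
    rw [hcol, Matrix.det_updateCol_add, Matrix.det_updateCol_smul,
      Matrix.det_updateCol_smul]
    have hMn : (M.updateCol n fun i => Complex.exp (mu i * lam n)) = M := by
      ext i j
      rw [Matrix.updateCol_apply]
      by_cases hj : j = n
      · subst hj; simp [hM, Amat, hn]
      · simp [hj]
    rw [hMn, ← hM']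
  rw [Dop, hderiv, h00]
  simp only [Ffun]
  rw [hEsum, hdetcons, ← hM]
  ring

lemma fold_eq (L : List (Fin (K + 1))) (hnd : L.Nodup) (h0 : ∀ m ∈ L, m ≠ 0) :
    List.foldr Dop (rhoT (K + 1)) L = Ffun L := by
  induction L with
  | nil =>
      funext lam mu
      simp [rhoT, Ffun, Amat]
  | cons n L ih =>
      have hnd' := hnd
      rw [List.nodup_cons] at hnd'
      rw [List.foldr_cons, ih hnd'.2 (fun m hm => h0 m (List.mem_cons_of_mem n hm))]
      funext lam mu
      exact dop_step n L hnd'.1 (h0 n (List.mem_cons_self (a := n) (l := L))) lam mu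

lemma mem_mapsucc (K : ℕ) (j : Fin (K + 1)) :
    j ∈ (List.finRange K).map Fin.succ ↔ j ≠ 0 := by
  constructor
  · intro hj h0
    obtain ⟨i, -, hi⟩ := List.mem_map.mp hj
    exact Fin.succ_ne_zero i (h0 ▸ hi)
  · intro hj
    obtain ⟨i, rfl⟩ := Fin.eq_succ_of_ne_zero hj
    exact List.mem_map.mpr ⟨i, List.mem_finRange i, rfl⟩

lemma detAmat (lam mu : Fin (K + 1) → ℂ) :
    Ffun ((List.finRange K).map Fin.succ) lam mu =
      ((Real.pi : ℂ) ^ (K + 1))⁻¹ *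
        ((-1 : ℂ) ^ K *
          (∏ i : Fin K, Complex.exp (-((lam i.succ - lam 0) * (mu i.succ - mu 0)))) *
          (Matrix.of fun m n : Fin K =>
            1 - (1 - (mu m.succ - mu 0) * (lam n.succ - lam 0)) *
              Complex.exp ((mu m.succ - mu 0) * (lam n.succ - lam 0))).det) := by
  classical
  set E : Matrix (Fin K) (Fin K) ℂ := Matrix.of fun m n : Fin K =>
      1 - (1 - (mu m.succ - mu 0) * (lam n.succ - lam 0)) *
        Complex.exp ((mu m.succ - mu 0) * (lam n.succ - lam 0)) with hE
  set C : Matrix (Fin (K + 1)) (Fin (K + 1)) ℂ := Matrix.of fun i j =>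
      if j = 0 then 1 else (1 - (lam j - lam 0) * (mu i - mu 0)) *
        Complex.exp ((mu i - mu 0) * (lam j - lam 0)) with hC
  have hC0 : ∀ j, C 0 j = 1 := by
    intro j
    by_cases hj : j = 0 <;> simp [hC, hj]
  have hCc0 : ∀ i, C i 0 = 1 := by intro i; simp [hC]
  -- Step 1: factor rows and columns
  have hcomb : ∀ (X A B Cc D : ℂ), A + (B + Cc) = D →
      Complex.exp A * (Complex.exp B * (X * Complex.exp Cc)) = X * Complex.exp D := by
    intro X A B Cc D h
    rw [← h, Complex.exp_add, Complex.exp_add]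
    ring
  have h1 : Amat ((List.finRange K).map Fin.succ) lam mu =
      Matrix.of fun i j => Complex.exp (mu i * lam 0) *
        (Matrix.of fun i j => Complex.exp (mu 0 * (lam j - lam 0)) * C i j) i j := by
    ext i j
    by_cases hj : j = 0
    · subst hj
      simp only [Amat, Matrix.of_apply, hCc0,
        if_neg (fun h => ((mem_mapsucc K 0).mp h) rfl), mul_one]
      rw [← Complex.exp_add]
      congr 1
      ring
    · simp only [Amat, Matrix.of_apply, if_pos ((mem_mapsucc K j).mpr hj), hC, if_neg hj]
      exact (hcomb _ _ _ _ _ (by ring)).symm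
  -- Step 2: row reduction
  set C' : Matrix (Fin (K + 1)) (Fin (K + 1)) ℂ := Matrix.of fun i j =>
      if i = 0 then (1 : ℂ) else C i j - 1 with hC'
  have h2 : C.det = C'.det := by
    refine Matrix.det_eq_of_forall_row_eq_smul_add_const
      (fun i => if i = 0 then 0 else 1) 0 (by simp) ?_
    intro i j
    by_cases hi : i = 0
    · subst hi; simp [hC', hC0]
    · simp only [hC', Matrix.of_apply, if_neg hi, hC0]
      simp
  -- Step 3: expand along column 0
  have h3 : C'.det = (C'.submatrix Fin.succ Fin.succ).det := by
    rw [Matrix.det_succ_column_zero]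
    rw [Finset.sum_eq_single 0]
    · simp [hC', Fin.succAbove_zero]
    · intro b _ hb
      simp [hC', Matrix.of_apply, if_neg hb, hCc0]
    · intro h
      exact absurd (Finset.mem_univ 0) h
  -- Step 4: the submatrix equals -E
  have h4 : C'.submatrix Fin.succ Fin.succ = -E := by
    ext i j
    simp only [Matrix.submatrix_apply, hC', hC, hE, Matrix.of_apply,
      if_neg (Fin.succ_ne_zero i), if_neg (Fin.succ_ne_zero j), Matrix.neg_apply]
    ring
  -- Step 5: collect exponentials
  have hexp : Complex.exp (-(∑ m, lam m * mu m)) * (∏ i, Complex.exp (mu i * lam 0)) *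
      (∏ j, Complex.exp (mu 0 * (lam j - lam 0))) =
      ∏ i : Fin K, Complex.exp (-((lam i.succ - lam 0) * (mu i.succ - mu 0))) := by
    rw [← Complex.exp_sum, ← Complex.exp_sum, ← Complex.exp_sum,
      ← Complex.exp_add, ← Complex.exp_add]
    congr 1
    rw [Fin.sum_univ_succ (f := fun m => lam m * mu m),
      Fin.sum_univ_succ (f := fun m => mu m * lam 0),
      Fin.sum_univ_succ (f := fun m => mu 0 * (lam m - lam 0))]
    have hpt : ∀ i : Fin K, -((lam i.succ - lam 0) * (mu i.succ - mu 0)) =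
        -(lam i.succ * mu i.succ) + (mu i.succ * lam 0 + mu 0 * (lam i.succ - lam 0)) := by
      intro i; ring
    rw [Finset.sum_congr rfl fun i _ => hpt i, Finset.sum_add_distrib, Finset.sum_add_distrib,
      Finset.sum_neg_distrib]
    ring
  -- assemble
  rw [Ffun, h1, Matrix.det_mul_column, Matrix.det_mul_row, h2, h3, h4, Matrix.det_neg,
    Fintype.card_fin]
  linear_combination (((Real.pi : ℂ) ^ (K + 1))⁻¹ * (-1 : ℂ) ^ K * E.det) * hexp

lemma final_step (K : ℕ) (lam mu : Fin (K + 1) → ℂ) :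
    D11tBulk (K + 1) lam mu =
      (-1 : ℂ) ^ K *
        (∏ i : Fin K,
          (1 + (lam i.succ - lam 0) * (mu i.succ - mu 0)) /
            ((lam i.succ - lam 0) ^ 2 * (mu i.succ - mu 0) ^ 2)) *
        Ffun ((List.finRange K).map Fin.succ) lam mu := by
  have hz : (⟨0, Nat.succ_pos K⟩ : Fin (K + 1)) = 0 := rfl
  have hevl : ev0 lam = lam 0 := by rw [ev0, dif_pos (Nat.succ_pos K), hz]
  have hevm : ev0 mu = mu 0 := by rw [ev0, dif_pos (Nat.succ_pos K), hz]
  simp only [D11tBulk, hevl, hevm]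
  show ((Real.pi : ℂ) ^ (K + 1))⁻¹ *
      (∏ i : Fin K,
        (1 + (lam i.succ - lam 0) * (mu i.succ - mu 0)) /
            ((lam i.succ - lam 0) ^ 2 * (mu i.succ - mu 0) ^ 2) *
          Complex.exp (-((lam i.succ - lam 0) * (mu i.succ - mu 0)))) *
      (Matrix.of fun m n : Fin K =>
        1 - (1 - (mu m.succ - mu 0) * (lam n.succ - lam 0)) *
          Complex.exp ((mu m.succ - mu 0) * (lam n.succ - lam 0))).det = _
  rw [detAmat, Finset.prod_mul_distrib]
  have key : ∀ p e d q : ℂ, q * (p * e) * d = (-1 : ℂ) ^ K * p * (q * ((-1 : ℂ) ^ K * e * d)) := by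
    intro p e d q
    have hsq : (-1 : ℂ) ^ K * (-1 : ℂ) ^ K = 1 := by rw [← mul_pow]; norm_num
    linear_combination (-(q * p * e * d)) * hsq
  exact key _ _ _ _

end AuxS10

/-- the bulk conditional diagonal overlap as a product of commuting first-order
differential operators applied to the (holomorphically extended) eigenvalue correlation
function. -/
theorem statement10 (k : ℕ) (hk : 1 ≤ k) (lam mu : Fin k → ℂ)
    (hl : ∀ i : Fin k, 1 ≤ i.val → lam i ≠ lam ⟨0, by omega⟩)
    (hm : ∀ i : Fin k, 1 ≤ i.val → mu i ≠ mu ⟨0, by omega⟩) :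
    D11tBulk k lam mu =
      (-1 : ℂ) ^ (k - 1) *
        (∏ i : Fin (k - 1),
          (1 + (lam (sh1 i) - lam ⟨0, by omega⟩) * (mu (sh1 i) - mu ⟨0, by omega⟩)) /
            ((lam (sh1 i) - lam ⟨0, by omega⟩) ^ 2 * (mu (sh1 i) - mu ⟨0, by omega⟩) ^ 2)) *
        List.foldr Dop (rhoT k) ((List.finRange k).drop 1) lam mu := by
  obtain ⟨K, rfl⟩ : ∃ K, k = K + 1 := ⟨k - 1, by omega⟩
  have hdrop : (List.finRange (K + 1)).drop 1 = (List.finRange K).map Fin.succ := by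
    rw [List.finRange_succ]
    rfl
  have hnd : ((List.finRange K).map Fin.succ).Nodup :=
    (List.nodup_finRange K).map (Fin.succ_injective K)
  have h0 : ∀ m ∈ (List.finRange K).map Fin.succ, m ≠ (0 : Fin (K + 1)) := by
    intro m hm
    obtain ⟨i, -, rfl⟩ := List.mem_map.mp hm
    exact Fin.succ_ne_zero i
  rw [hdrop, fold_eq _ hnd h0]
  exact final_step K lam mu
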